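/- Let k be a field of characteristic p, and A = k[t]/(t^p - 1). For each μ ∈ k, setting Δ(t) = μ(ts - t - s + 1) + t + s - 1 (in A ⊗ A ≅ k[s,t]/((s-1)^p,(t-1)^p), where only terms of bidegree ≤ (1,1) appear) and ε(t) = 1 defines a bialgebra structure on A, and every bialgebra structure on A with Δ(t) of the form Ats + Bt + Cs + D arises this way; i.e., such structures are in bijection with k. -/

import Mathlib

open TensorProduct Polynomial

/-- A (bialgebra-compatible) coalgebra structure on a fixed commutative
`k`-algebra `A`: algebra homomorphisms `Δ : A → A ⊗ A` and `ε : A → k`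
satisfying coassociativity and counitality.  Equivalently, a bialgebra
structure on `A` with its given multiplication. -/
structure CoalgOnAlg (k A : Type*) [CommRing k] [CommRing A] [Algebra k A] where
  comul : A →ₐ[k] A ⊗[k] A
  counit : A →ₐ[k] k
  coassoc : ∀ a : A,
    (TensorProduct.assoc k A A A)
        (TensorProduct.map comul.toLinearMap LinearMap.id (comul a)) =
      TensorProduct.map LinearMap.id comul.toLinearMap (comul a)
  counit_left : ∀ a : A,
    (TensorProduct.lid k A)
        (TensorProduct.map counit.toLinearMap LinearMap.id (comul a)) = a
  counit_right : ∀ a : A,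
    (TensorProduct.rid k A)
        (TensorProduct.map LinearMap.id counit.toLinearMap (comul a)) = a

/-- The algebra `A = k[t]/(t^p - 1)`. -/
abbrev circAlg (k : Type*) [Field k] (p : ℕ) : Type _ :=
  Polynomial k ⧸ Ideal.span {(X : Polynomial k) ^ p - 1}

/-- The image of `t` in `k[t]/(t^p - 1)`. -/
noncomputable def tGen (k : Type*) [Field k] (p : ℕ) : circAlg k p :=
  Ideal.Quotient.mk _ X

set_option maxHeartbeats 1000000
set_option synthInstance.maxHeartbeats 1000000

namespace BialgAux

variable (k : Type*) [Field k] (p : ℕ) [Fact p.Prime] [CharP k p]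
set_option linter.unusedSectionVars false

lemma pne : p ≠ 0 := Nat.Prime.ne_zero Fact.out

lemma gmonic : ((X : Polynomial k) ^ p - 1).Monic := by
  have h : ((X : Polynomial k) ^ p - 1) = X ^ p - C 1 := by simp
  rw [h]; exact monic_X_pow_sub_C 1 (pne p)

lemma gdeg : ((X : Polynomial k) ^ p - 1).degree = p := by
  have h : ((X : Polynomial k) ^ p - 1) = X ^ p - C 1 := by simp
  rw [h]; exact degree_X_pow_sub_C (Nat.Prime.pos Fact.out) 1

/-- `t ^ p = 1`. -/
lemma tpow : (tGen k p) ^ p = 1 := by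
  have h0 : (Ideal.Quotient.mk (Ideal.span {(X : Polynomial k) ^ p - 1}))
      ((X : Polynomial k) ^ p - 1) = 0 :=
    Ideal.Quotient.eq_zero_iff_mem.mpr (Ideal.subset_span rfl)
  have := (map_sub (Ideal.Quotient.mk (Ideal.span {(X : Polynomial k) ^ p - 1}))
    ((X : Polynomial k) ^ p) 1)
  rw [this] at h0
  have h1 : (Ideal.Quotient.mk (Ideal.span {(X : Polynomial k) ^ p - 1}))
      ((X : Polynomial k) ^ p) = (tGen k p) ^ p := by rw [map_pow]; rfl
  rw [h1, map_one, sub_eq_zero] at h0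
  exact h0

/-- The counit, sending `t ↦ 1`. -/
noncomputable def eps : circAlg k p →ₐ[k] k :=
  AdjoinRoot.liftAlgHom _ (Algebra.ofId k k) 1 (by simp)

lemma eps_t : eps k p (tGen k p) = 1 := by
  have := AdjoinRoot.liftAlgHom_root (x := (1:k)) (p := (X : Polynomial k) ^ p - 1) (i := Algebra.ofId k k) (by simp)
  exact this

lemma hom_ext {B : Type*} [Semiring B] [Algebra k B] {f g : circAlg k p →ₐ[k] B}
    (h : f (tGen k p) = g (tGen k p)) : f = g :=
  AdjoinRoot.algHom_ext h

lemma charA  : CharP (circAlg k p) p := by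
  refine charP_of_injective_algebraMap (R := k) (fun x y hxy => ?_) p
  have := congrArg (eps k p) hxy
  simpa using this

lemma charAA  : CharP (circAlg k p ⊗[k] circAlg k p) p := by
  refine charP_of_injective_algebraMap (R := k) (A := circAlg k p ⊗[k] circAlg k p)
    (fun x y hxy => ?_) p
  have := congrArg ((Algebra.TensorProduct.lid k k).toAlgHom.comp
    (Algebra.TensorProduct.map (eps k p) (eps k p))) hxy
  simpa using this

lemma upow  : (tGen k p - 1) ^ p = 0 := by
  haveI := charA k p
  rw [sub_pow_char, tpow, one_pow, sub_self]

/-- The modByMonic linear section. -/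
noncomputable def Mh : circAlg k p →ₗ[k] Polynomial k :=
  AdjoinRoot.modByMonicHom (gmonic k p)

lemma Mh_mk (f : Polynomial k) :
    Mh k p (Ideal.Quotient.mk _ f) = f %ₘ ((X : Polynomial k) ^ p - 1) := rfl

lemma Mh_t : Mh k p (tGen k p) = X := by
  rw [tGen, Mh_mk, Polynomial.modByMonic_eq_self_iff (gmonic k p) |>.mpr]
  rw [gdeg, degree_X]
  exact_mod_cast Nat.one_lt_cast.mpr (Nat.Prime.one_lt Fact.out)

lemma Mh_one : Mh k p (1 : circAlg k p) = 1 := by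
  have h : (1 : circAlg k p) = Ideal.Quotient.mk _ 1 := rfl
  rw [h, Mh_mk, Polynomial.modByMonic_eq_self_iff (gmonic k p) |>.mpr]
  rw [gdeg, degree_one]
  exact_mod_cast Nat.cast_pos.mpr (Nat.Prime.pos Fact.out)

/-- coefficient functionals -/
noncomputable def cf (i : ℕ) : circAlg k p →ₗ[k] k :=
  (lcoeff k i).comp (Mh k p)

lemma cf1_t : cf k p 1 (tGen k p) = 1 := by simp [cf, Mh_t]
lemma cf1_one : cf k p 1 (1 : circAlg k p) = 0 := by simp [cf, Mh_one, Polynomial.coeff_one]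
lemma cf0_t : cf k p 0 (tGen k p) = 0 := by simp [cf, Mh_t]
lemma cf0_one : cf k p 0 (1 : circAlg k p) = 1 := by simp [cf, Mh_one]

lemma cf1_u : cf k p 1 (tGen k p - 1) = 1 := by
  rw [map_sub, cf1_t, cf1_one, sub_zero]


/-- The image of `t` under comultiplication. -/
noncomputable def D0 (mu : k) : circAlg k p ⊗[k] circAlg k p :=
  mu • ((tGen k p - 1) ⊗ₜ[k] (tGen k p - 1)) +
    (tGen k p ⊗ₜ[k] 1 + 1 ⊗ₜ[k] tGen k p - 1 ⊗ₜ[k] 1)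

lemma D_split (mu : k) :
    D0 k p mu = 1 + (mu • ((tGen k p - 1) ⊗ₜ[k] (tGen k p - 1)) +
      ((tGen k p - 1) ⊗ₜ[k] 1 + 1 ⊗ₜ[k] (tGen k p - 1))) := by
  rw [D0]
  have h1 : (1 : circAlg k p ⊗[k] circAlg k p) = 1 ⊗ₜ[k] 1 := rfl
  rw [h1]
  simp only [TensorProduct.sub_tmul, TensorProduct.tmul_sub]
  module

lemma Dpow (mu : k) : (D0 k p mu) ^ p = 1 := by
  haveI := charAA k p
  haveI : ExpChar (circAlg k p ⊗[k] circAlg k p) p := ExpChar.prime Fact.out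
  rw [D_split, add_comm, add_pow_char (R := circAlg k p ⊗[k] circAlg k p),
    add_pow_char (R := circAlg k p ⊗[k] circAlg k p),
    add_pow_char (R := circAlg k p ⊗[k] circAlg k p)]
  simp [_root_.smul_pow, Algebra.TensorProduct.tmul_pow, upow]
  exact one_pow (M := circAlg k p ⊗[k] circAlg k p) p

/-- The comultiplication. -/
noncomputable def Del (mu : k) : circAlg k p →ₐ[k] circAlg k p ⊗[k] circAlg k p :=
  AdjoinRoot.liftAlgHom _ (Algebra.ofId k _) (D0 k p mu) (by
    simp only [eval₂_sub, eval₂_X_pow, eval₂_one, Dpow, sub_self])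

lemma Del_t (mu : k) : Del k p mu (tGen k p) = D0 k p mu := by
  have := AdjoinRoot.liftAlgHom_root (x := D0 k p mu) (p := (X : Polynomial k) ^ p - 1)
    (i := Algebra.ofId k _) (by simp only [eval₂_sub, eval₂_X_pow, eval₂_one, Dpow, sub_self])
  exact this

lemma Del_u (mu : k) :
    Del k p mu (tGen k p - 1) = mu • ((tGen k p - 1) ⊗ₜ[k] (tGen k p - 1)) +
      ((tGen k p - 1) ⊗ₜ[k] 1 + 1 ⊗ₜ[k] (tGen k p - 1)) := by
  rw [map_sub, show Del k p mu 1 = 1 from (Del k p mu).map_one', Del_t, D_split, add_sub_cancel_left]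


lemma eps_u : eps k p (tGen k p - 1) = 0 := by
  rw [map_sub, eps_t, map_one, sub_self]

lemma key_coassoc (mu : k) :
    (Algebra.TensorProduct.assoc k k k (circAlg k p) (circAlg k p) (circAlg k p)).toAlgHom.comp
      ((Algebra.TensorProduct.map (Del k p mu) (AlgHom.id k (circAlg k p))).comp (Del k p mu)) =
    (Algebra.TensorProduct.map (AlgHom.id k (circAlg k p)) (Del k p mu)).comp (Del k p mu) := by
  apply hom_ext
  simp only [AlgHom.comp_apply, AlgEquiv.toAlgHom_eq_coe, AlgHom.coe_coe, AlgEquiv.coe_algHom, Del_t, D_split]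
  simp only [Algebra.TensorProduct.one_def, map_add, map_smul, map_one,
    Algebra.TensorProduct.map_tmul, AlgHom.coe_id, id_eq, Del_u,
    TensorProduct.add_tmul, TensorProduct.tmul_add, ← TensorProduct.smul_tmul',
    TensorProduct.tmul_smul, smul_add, Algebra.TensorProduct.assoc_tmul,
    show Del k p mu 1 = 1 from (Del k p mu).map_one']
  module

lemma key_left (mu : k) :
    (Algebra.TensorProduct.lid k (circAlg k p)).toAlgHom.comp
      ((Algebra.TensorProduct.map (eps k p) (AlgHom.id k (circAlg k p))).comp (Del k p mu)) =
    AlgHom.id k (circAlg k p) := by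
  apply hom_ext
  simp only [AlgHom.comp_apply, AlgEquiv.toAlgHom_eq_coe, AlgHom.coe_coe, AlgEquiv.coe_algHom, Del_t, D_split,
    map_add, map_smul, map_one, Algebra.TensorProduct.map_tmul, AlgHom.coe_id, id_eq,
    eps_u, TensorProduct.zero_tmul, smul_zero, map_zero, Algebra.TensorProduct.lid_tmul,
    one_smul, AlgHom.id_apply]
  abel

lemma key_right (mu : k) :
    (Algebra.TensorProduct.rid k k (circAlg k p)).toAlgHom.comp
      ((Algebra.TensorProduct.map (AlgHom.id k (circAlg k p)) (eps k p)).comp (Del k p mu)) =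
    AlgHom.id k (circAlg k p) := by
  apply hom_ext
  simp only [AlgHom.comp_apply, AlgEquiv.toAlgHom_eq_coe, AlgHom.coe_coe, AlgEquiv.coe_algHom, Del_t, D_split,
    map_add, map_smul, map_one, Algebra.TensorProduct.map_tmul, AlgHom.coe_id, id_eq,
    eps_u, TensorProduct.tmul_zero, smul_zero, map_zero, Algebra.TensorProduct.rid_tmul,
    one_smul, AlgHom.id_apply]
  abel


noncomputable def Smu (mu : k) : CoalgOnAlg k (circAlg k p) where
  comul := Del k p mu
  counit := eps k p
  coassoc := fun a => by
    have h := DFunLike.congr_fun (key_coassoc k p mu) a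
    exact h
  counit_left := fun a => by
    have h := DFunLike.congr_fun (key_left k p mu) a
    exact h
  counit_right := fun a => by
    have h := DFunLike.congr_fun (key_right k p mu) a
    have e : ∀ z : circAlg k p ⊗[k] k,
        TensorProduct.rid k (circAlg k p) z = Algebra.TensorProduct.rid k k (circAlg k p) z := by
      intro z
      induction z using TensorProduct.induction_on with
      | zero => simp
      | tmul x y => simp
      | add x y hx hy => rw [map_add, map_add, hx, hy]
    rw [e]
    exact h

lemma Smu_comul_t (mu : k) : (Smu k p mu).comul (tGen k p) = D0 k p mu := Del_t k p mu


lemma counit_t (S : CoalgOnAlg k (circAlg k p)) : S.counit (tGen k p) = 1 := by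
  have h1 : S.counit (tGen k p) ^ p = 1 := by rw [← map_pow, tpow, map_one]
  have h2 : (S.counit (tGen k p) - 1 : k) ^ p = 0 := by
    rw [sub_pow_char, h1, one_pow, sub_self]
  have h3 := pow_eq_zero_iff (pne p) |>.mp h2
  have := sub_eq_zero.mp h3
  exact this

lemma part2 (S : CoalgOnAlg k (circAlg k p)) (a b c d : k)
    (h : S.comul (tGen k p) =
      a • (tGen k p ⊗ₜ[k] tGen k p) + b • (tGen k p ⊗ₜ[k] 1) +
        c • ((1 : circAlg k p) ⊗ₜ[k] tGen k p) +
        d • ((1 : circAlg k p) ⊗ₜ[k] (1 : circAlg k p))) :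
    ∃! mu : k,
      S.comul (tGen k p) =
        mu • ((tGen k p - 1) ⊗ₜ[k] (tGen k p - 1)) +
          (tGen k p ⊗ₜ[k] 1 + 1 ⊗ₜ[k] tGen k p - 1 ⊗ₜ[k] 1) := by
  have he := counit_t k p S
  have hL := S.counit_left (tGen k p)
  have hR := S.counit_right (tGen k p)
  rw [h] at hL hR
  simp only [map_add, map_smul, TensorProduct.map_tmul, LinearMap.id_coe, id_eq,
    AlgHom.toLinearMap_apply, he, map_one, TensorProduct.lid_tmul, TensorProduct.rid_tmul,
    one_smul] at hL hR
  -- extract coefficients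
  have h11 := congrArg (cf k p 1) hL
  have h10 := congrArg (cf k p 0) hL
  have h21 := congrArg (cf k p 1) hR
  have h20 := congrArg (cf k p 0) hR
  simp only [map_add, map_smul, cf1_t, cf1_one, cf0_t, cf0_one, smul_eq_mul,
    mul_one, mul_zero, add_zero, zero_add] at h11 h10 h21 h20
  -- h11 : a + c = 1, h10 : b + d = 0, h21 : a + b = 1, h20 : c + d = 0
  have hb : b = 1 - a := by linear_combination h21
  have hc : c = 1 - a := by linear_combination h11
  have hd : d = a - 1 := by linear_combination h10 - h21
  have hE : S.comul (tGen k p) =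
      a • ((tGen k p - 1) ⊗ₜ[k] (tGen k p - 1)) +
        (tGen k p ⊗ₜ[k] 1 + 1 ⊗ₜ[k] tGen k p - 1 ⊗ₜ[k] 1) := by
    rw [h, hb, hc, hd]
    simp only [TensorProduct.sub_tmul, TensorProduct.tmul_sub, smul_sub, smul_add, sub_smul,
      one_smul]
    module
  refine ⟨a, hE, fun nu hnu => ?_⟩
  have hcan : nu • ((tGen k p - 1) ⊗ₜ[k] (tGen k p - 1)) =
      a • ((tGen k p - 1) ⊗ₜ[k] (tGen k p - 1)) :=
    add_right_cancel (hnu.symm.trans hE)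
  have hpsi := congrArg ((TensorProduct.lid k k).toLinearMap.comp
    (TensorProduct.map (cf k p 1) (cf k p 1))) hcan
  simpa [map_smul, TensorProduct.map_tmul, cf1_u] using hpsi

end BialgAux

set_option maxHeartbeats 1000000 in
/-- In characteristic `p`, on `A = k[t]/(t^p - 1)` the assignment
`Δ(t) = μ(t-1)⊗(t-1) + t⊗1 + 1⊗t - 1⊗1` defines a bialgebra structure for
every `μ ∈ k`, every bialgebra structure with `Δ(t) = A t⊗t + B t⊗1 + C 1⊗t
+ D 1⊗1` arises this way, and the `μ` is unique: such bialgebra structures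
are in bijection with elements of `k`. -/
theorem bialgebra_structures_char_p (k : Type*) [Field k] (p : ℕ) [Fact p.Prime]
    [CharP k p] :
    (∀ μ : k,
      ∃ S : CoalgOnAlg k (circAlg k p),
        S.comul (tGen k p) =
          μ • ((tGen k p - 1) ⊗ₜ[k] (tGen k p - 1)) +
            (tGen k p ⊗ₜ[k] 1 + 1 ⊗ₜ[k] tGen k p - 1 ⊗ₜ[k] 1)) ∧
    (∀ S : CoalgOnAlg k (circAlg k p), ∀ a b c d : k,
        S.comul (tGen k p) =
            a • (tGen k p ⊗ₜ[k] tGen k p) + b • (tGen k p ⊗ₜ[k] 1) +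
              c • ((1 : circAlg k p) ⊗ₜ[k] tGen k p) +
              d • ((1 : circAlg k p) ⊗ₜ[k] (1 : circAlg k p)) →
        ∃! μ : k,
          S.comul (tGen k p) =
            μ • ((tGen k p - 1) ⊗ₜ[k] (tGen k p - 1)) +
              (tGen k p ⊗ₜ[k] 1 + 1 ⊗ₜ[k] tGen k p - 1 ⊗ₜ[k] 1)) := by
  constructor
  · intro mu
    exact ⟨BialgAux.Smu k p mu, BialgAux.Del_t k p mu⟩
  · intro S a b c d h
    exact BialgAux.part2 k p S a b c d h
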